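/- Let Z be a metric space, 0 < r ≤ 1/6, and for k ∈ ℤ let X_k = RipsG_{r^k}(Z) be the Rips graph on Z with edges between points at distance ≤ r^k. Form the graph X = RH(Z) with vertex set the disjoint union of copies x^k of points x ∈ Z for k ∈ ℤ, horizontal edges [x^k, y^k] when d_Z(x,y) ≤ r^k, and radial edges [x^k, y^{k+1}] when d_Z(x,y) ≤ r^k. Then for any two vertices x^k, x'^{k'} of X there exists a vertex y at level m ≤ min(k, k') such that both x^k and x'^{k'} are connected to y by radial geodesics (paths using only radial edges, one per level). In particular X is connected. -/

import Mathlib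

/-- Adjacency in the Rips hyperbolic approximation `RH(Z)`: two distinct vertices are
adjacent iff their levels differ by at most 1 and the distance of the underlying points
is at most `r` to the power of the lower of the two levels (this encodes both the
horizontal and the radial edges). -/
def RHAdj {Z : Type*} [MetricSpace Z] (r : ℝ) (v w : Z × ℤ) : Prop :=
  v ≠ w ∧ |v.2 - w.2| ≤ 1 ∧ dist v.1 w.1 ≤ r ^ (min v.2 w.2)

/-- The Rips hyperbolic approximation graph `RH(Z)`. -/
def RHGraph (Z : Type*) [MetricSpace Z] (r : ℝ) : SimpleGraph (Z × ℤ) where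
  Adj := RHAdj r
  symm := by
    constructor
    rintro v w ⟨h1, h2, h3⟩
    exact ⟨h1.symm, by rwa [abs_sub_comm], by rwa [min_comm, dist_comm]⟩
  loopless := by constructor; rintro v ⟨h1, -⟩; exact h1 rfl

/-- A radial chain in `RH(Z)` from `v` down to `y`: each step goes down exactly one
level along a radial edge. -/
def RadialChain {Z : Type*} [MetricSpace Z] (r : ℝ) (v y : Z × ℤ) : Prop :=
  ∃ (n : ℕ) (c : ℕ → Z × ℤ), c 0 = v ∧ c n = y ∧
    ∀ i < n, (c (i + 1)).2 = (c i).2 - 1 ∧ dist (c i).1 (c (i + 1)).1 ≤ r ^ (c (i + 1)).2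

lemma aux_chain {Z : Type*} [MetricSpace Z] {r : ℝ} (hr : 0 < r) {x x' : Z} {k m : ℤ}
    (hm : m < k) (hd : dist x x' ≤ r ^ m) : RadialChain r (x, k) (x', m) := by
  refine ⟨(k - m).toNat, fun i => (if (i : ℤ) < k - m then x else x', k - i), ?_, ?_, ?_⟩
  · simp [show (0:ℤ) < k - m by omega]
    exact fun h => absurd h (by omega)
  · have h : ((k - m).toNat : ℤ) = k - m := Int.toNat_of_nonneg (by omega)
    simp [h]
  · intro i hi
    have hi' : (i : ℤ) < k - m := Int.lt_toNat.mp hi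
    dsimp only
    constructor
    · push_cast; ring
    · simp only [Nat.cast_add, Nat.cast_one]
      by_cases h2 : (i : ℤ) + 1 < k - m
      · rw [if_pos hi', if_pos h2, dist_self]; positivity
      · rw [if_pos hi', if_neg h2, show k - ((i : ℤ) + 1) = m by omega]; exact hd

lemma chain_reach {Z : Type*} [MetricSpace Z] {r : ℝ} (hr : 0 < r) {v y : Z × ℤ}
    (h : RadialChain r v y) : (RHGraph Z r).Reachable v y := by
  obtain ⟨n, c, h0, hn, hs⟩ := h
  subst h0 hn
  induction n with
  | zero => exact SimpleGraph.Reachable.refl _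
  | succ n ih =>
    refine (ih fun i hi => hs i (by omega)).trans (SimpleGraph.Adj.reachable ?_)
    obtain ⟨hl, hd⟩ := hs n (by omega)
    refine ⟨fun he => by rw [he] at hl; omega, by rw [hl]; simp, ?_⟩
    rwa [min_eq_right (by omega)]


/-- For any two vertices of `RH(Z)` there exists a vertex `y` at a level
`m ≤ min` of the two levels to which both are connected by radial geodesics;
in particular `RH(Z)` is connected. -/
theorem stmt8 {Z : Type*} [MetricSpace Z] [Nonempty Z] (r : ℝ) (hr : 0 < r)
    (hr6 : r ≤ 1 / 6) :
    (∀ v w : Z × ℤ, ∃ y : Z × ℤ, y.2 ≤ min v.2 w.2 ∧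
      RadialChain r v y ∧ RadialChain r w y) ∧
    (RHGraph Z r).Connected := by
  have key : ∀ v w : Z × ℤ, ∃ y : Z × ℤ, y.2 ≤ min v.2 w.2 ∧
      RadialChain r v y ∧ RadialChain r w y := by
    rintro ⟨x, k⟩ ⟨x', k'⟩
    have hr1 : 1 < 1 / r := by
      rw [lt_div_iff₀ hr]; linarith
    obtain ⟨n, hn⟩ := pow_unbounded_of_one_lt (dist x x') hr1
    set m : ℤ := min (min k k' - 1) (-(n : ℤ)) with hmdef
    have hmn : m ≤ -(n : ℤ) := min_le_right _ _
    have hpow : dist x x' ≤ r ^ m := by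
      calc dist x x' ≤ (1 / r) ^ n := hn.le
        _ = r ^ (-(n : ℤ)) := by
            rw [one_div, inv_pow, ← zpow_natCast, ← zpow_neg]
        _ ≤ r ^ m := ((zpow_right_strictAnti₀ hr (by linarith)).antitone hmn)
    refine ⟨(x', m), by simp only [hmdef]; omega, ?_, ?_⟩
    · exact aux_chain hr (by omega) hpow
    · exact aux_chain hr (by omega) (by simp [zpow_pos hr m |>.le])
  refine ⟨key, ⟨fun v w => ?_⟩⟩
  obtain ⟨y, -, h1, h2⟩ := key v w
  exact (chain_reach hr h1).trans (chain_reach hr h2).symm
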